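/- Let λ ≠ 0, δ > 0, ε > 0, and let ψ : [0, ∞) → ℝ be continuously differentiable with f(t) = ψ'(t) + λψ(t). Assume e^{δt}ψ(t) → 0 as t → ∞ and that the functions t ↦ e^{2δt}ψ(t)² and t ↦ e^{2δt}f(t)² are integrable on (0, ∞). Then (λ² − δ² − εδ²) ∫₀^∞ e^{2δt}ψ(t)² dt ≤ (1 + 1/ε) ∫₀^∞ e^{2δt}f(t)² dt + λ ψ(0)². -/

import Mathlib

open MeasureTheory Set Filter

/-- Integrated exponentially weighted `L²` estimate for nonzero modes on the
half line: with `f = ψ' + λψ`, if `e^{δt}ψ(t) → 0` at infinity and the weighted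
squares are integrable, then
`(λ² − δ² − εδ²) ∫₀^∞ e^{2δt}ψ² ≤ (1 + 1/ε) ∫₀^∞ e^{2δt}f² + λ ψ(0)²`. -/
theorem integrated_weighted_estimate_nonzero_mode
    (lam : ℝ) (hlam : lam ≠ 0) (δ ε : ℝ) (hδ : 0 < δ) (hε : 0 < ε)
    (ψ ψ' f : ℝ → ℝ)
    (hderiv : ∀ t ∈ Ici (0 : ℝ), HasDerivAt ψ (ψ' t) t)
    (hcont : ContinuousOn ψ' (Ici (0 : ℝ)))
    (hf : ∀ t, f t = ψ' t + lam * ψ t)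
    (hdecay : Tendsto (fun t => Real.exp (δ * t) * ψ t) atTop (nhds 0))
    (hint₁ : IntegrableOn (fun t => Real.exp (2 * δ * t) * (ψ t) ^ 2) (Ioi 0))
    (hint₂ : IntegrableOn (fun t => Real.exp (2 * δ * t) * (f t) ^ 2) (Ioi 0)) :
    (lam ^ 2 - δ ^ 2 - ε * δ ^ 2) *
        ∫ t in Ioi (0 : ℝ), Real.exp (2 * δ * t) * (ψ t) ^ 2 ≤
      (1 + 1 / ε) * (∫ t in Ioi (0 : ℝ), Real.exp (2 * δ * t) * (f t) ^ 2)
        + lam * (ψ 0) ^ 2 := by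
  -- G t = lam * e^{2δt} ψ(t)^2, with derivative g'
  set G : ℝ → ℝ := fun t => lam * (Real.exp (2 * δ * t) * (ψ t) ^ 2) with hG
  set g' : ℝ → ℝ := fun t =>
    lam * ((2 * δ) * Real.exp (2 * δ * t) * (ψ t) ^ 2
      + Real.exp (2 * δ * t) * (2 * ψ t * ψ' t)) with hg'
  -- continuity of ψ on Ici 0
  have hψc : ContinuousOn ψ (Ici (0 : ℝ)) :=
    fun t ht => (hderiv t ht).continuousAt.continuousWithinAt
  have hfc : ContinuousOn f (Ici (0 : ℝ)) := by
    have : ContinuousOn (fun t => ψ' t + lam * ψ t) (Ici (0 : ℝ)) :=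
      hcont.add ((continuousOn_const).mul hψc)
    exact this.congr fun t _ => hf t
  -- derivative fact
  have hGderiv : ∀ t ∈ Ici (0 : ℝ), HasDerivAt G (g' t) t := by
    intro t ht
    have h1 : HasDerivAt (fun t => Real.exp (2 * δ * t)) ((2 * δ) * Real.exp (2 * δ * t)) t := by
      simpa [mul_comm] using ((hasDerivAt_id t).const_mul (2 * δ)).exp
    have h2 : HasDerivAt (fun t => (ψ t) ^ 2) (2 * ψ t * ψ' t) t := by
      simpa [mul_comm, mul_assoc] using (hderiv t ht).fun_pow 2
    simpa [hG, hg'] using ((h1.mul h2).const_mul lam)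
  -- g' rewritten: g' t = (2δ lam - 2 lam^2) wψ² + 2 lam * (w ψ f)
  have hg'eq : ∀ t, g' t = (2 * δ * lam - 2 * lam ^ 2) * (Real.exp (2 * δ * t) * (ψ t) ^ 2)
      + 2 * lam * (Real.exp (2 * δ * t) * (ψ t * f t)) := by
    intro t
    simp only [hg', hf t]
    ring
  -- integrability of w ψ f
  have hmeas : AEStronglyMeasurable (fun t => Real.exp (2 * δ * t) * (ψ t * f t))
      (volume.restrict (Ioi (0 : ℝ))) := by
    have hc : ContinuousOn (fun t => Real.exp (2 * δ * t) * (ψ t * f t)) (Ici (0 : ℝ)) :=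
      ((Real.continuous_exp.comp (continuous_const.mul continuous_id)).continuousOn).mul
        (hψc.mul hfc)
    exact (hc.mono Ioi_subset_Ici_self).aestronglyMeasurable measurableSet_Ioi
  have hint₃ : IntegrableOn (fun t => Real.exp (2 * δ * t) * (ψ t * f t)) (Ioi 0) := by
    refine Integrable.mono' ((hint₁.add hint₂).div_const 2) hmeas ?_
    refine Filter.Eventually.of_forall fun t => ?_
    have hE : (0:ℝ) < Real.exp (2 * δ * t) := Real.exp_pos _
    have : |ψ t * f t| ≤ ((ψ t) ^ 2 + (f t) ^ 2) / 2 := by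
      rcases abs_cases (ψ t * f t) with ⟨h, _⟩ | ⟨h, _⟩ <;> nlinarith [sq_nonneg (ψ t - f t), sq_nonneg (ψ t + f t)]
    rw [Real.norm_eq_abs, abs_mul, abs_of_pos hE]
    simp only [Pi.add_apply, Pi.div_apply]
    calc Real.exp (2 * δ * t) * |ψ t * f t|
        ≤ Real.exp (2 * δ * t) * (((ψ t) ^ 2 + (f t) ^ 2) / 2) := by
          exact mul_le_mul_of_nonneg_left this hE.le
      _ = (Real.exp (2 * δ * t) * (ψ t) ^ 2 + Real.exp (2 * δ * t) * (f t) ^ 2) / 2 := by ring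
  have hint₄ : IntegrableOn g' (Ioi 0) := by
    have : IntegrableOn (fun t => (2 * δ * lam - 2 * lam ^ 2) * (Real.exp (2 * δ * t) * (ψ t) ^ 2)
        + 2 * lam * (Real.exp (2 * δ * t) * (ψ t * f t))) (Ioi 0) :=
      (hint₁.const_mul _).add (hint₃.const_mul _)
    exact this.congr_fun (fun t _ => (hg'eq t).symm) measurableSet_Ioi
  -- limit of G at infinity
  have hGlim : Tendsto G atTop (nhds 0) := by
    have h0 : Tendsto (fun t => lam * ((Real.exp (δ * t) * ψ t) * (Real.exp (δ * t) * ψ t)))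
        atTop (nhds (lam * (0 * 0))) := ((hdecay.mul hdecay).const_mul lam)
    rw [show (0:ℝ) = lam * (0 * 0) by ring]
    refine h0.congr fun t => ?_
    have hex : Real.exp (2 * δ * t) = Real.exp (δ * t) * Real.exp (δ * t) := by
      rw [← Real.exp_add]; ring_nf
    simp only [hG, hex]
    ring
  -- FTC on the half-line
  have hFTC : ∫ t in Ioi (0:ℝ), g' t = 0 - G 0 :=
    MeasureTheory.integral_Ioi_of_hasDerivAt_of_tendsto' hGderiv hint₄ hGlim
  have hG0 : G 0 = lam * (ψ 0) ^ 2 := by simp [hG]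
  -- pointwise inequality on Ioi 0
  have hpt : ∀ t ∈ Ioi (0:ℝ),
      0 ≤ (1 + 1/ε) * (Real.exp (2 * δ * t) * (f t) ^ 2)
        - (lam ^ 2 - δ ^ 2 - ε * δ ^ 2) * (Real.exp (2 * δ * t) * (ψ t) ^ 2) - g' t := by
    intro t ht
    have hE : (0:ℝ) < Real.exp (2 * δ * t) := Real.exp_pos _
    have hft := hf t
    simp only [hg']
    set x := ψ t
    set y := ψ' t
    have hF : f t = y + lam * x := hft
    rw [hF]
    have key : lam * ((2 * δ) * (x ^ 2) + (2 * x * y))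
        + (lam ^ 2 - δ ^ 2 - ε * δ ^ 2) * x ^ 2 ≤ (1 + 1/ε) * (y + lam * x) ^ 2 := by
      rw [← sub_nonneg]
      have expand : (1 + 1/ε) * (y + lam * x) ^ 2
          - (lam * ((2 * δ) * (x ^ 2) + (2 * x * y))
            + (lam ^ 2 - δ ^ 2 - ε * δ ^ 2) * x ^ 2)
          = ((ε * δ * x - (y + lam * x)) ^ 2 / ε + (δ * x + y) ^ 2) := by
        field_simp
        ring
      rw [expand]
      positivity
    nlinarith [mul_le_mul_of_nonneg_left key hE.le]
  -- integrate the pointwise inequality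
  have hintH : IntegrableOn (fun t =>
      (1 + 1/ε) * (Real.exp (2 * δ * t) * (f t) ^ 2)
        - (lam ^ 2 - δ ^ 2 - ε * δ ^ 2) * (Real.exp (2 * δ * t) * (ψ t) ^ 2) - g' t) (Ioi 0) :=
    ((hint₂.const_mul _).sub (hint₁.const_mul _)).sub hint₄
  have hnonneg : 0 ≤ ∫ t in Ioi (0:ℝ),
      ((1 + 1/ε) * (Real.exp (2 * δ * t) * (f t) ^ 2)
        - (lam ^ 2 - δ ^ 2 - ε * δ ^ 2) * (Real.exp (2 * δ * t) * (ψ t) ^ 2) - g' t) :=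
    MeasureTheory.setIntegral_nonneg measurableSet_Ioi hpt
  have hA : IntegrableOn (fun t => (1 + 1/ε) * (Real.exp (2 * δ * t) * (f t) ^ 2)) (Ioi 0) :=
    hint₂.const_mul _
  have hB : IntegrableOn (fun t =>
      (lam ^ 2 - δ ^ 2 - ε * δ ^ 2) * (Real.exp (2 * δ * t) * (ψ t) ^ 2)) (Ioi 0) :=
    hint₁.const_mul _
  have hAB : IntegrableOn (fun t => (1 + 1/ε) * (Real.exp (2 * δ * t) * (f t) ^ 2)
      - (lam ^ 2 - δ ^ 2 - ε * δ ^ 2) * (Real.exp (2 * δ * t) * (ψ t) ^ 2)) (Ioi 0) := hA.sub hB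
  rw [MeasureTheory.integral_sub hAB hint₄, MeasureTheory.integral_sub hA hB,
    MeasureTheory.integral_const_mul, MeasureTheory.integral_const_mul, hFTC, hG0] at hnonneg
  linarith
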